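/- arXiv:1206.2663 — 3 statements merged into one kernel-verified Lean document; each statement's English description precedes it below -/
import Mathlib

section
/- Let g ≥ 1 and c > 0. There exists a constant C > 0, depending only on g and c, with the following property: if Y = (y_{ij}) is a real symmetric positive definite g×g matrix such that |y_{ij}| ≤ min(y_{ii}, y_{jj})/2 for all i ≠ j and ∏_{i=1}^g y_{ii} ≤ c · det Y, then for all i, j the entries of the inverse matrix satisfy |(Y⁻¹)_{ij}| ≤ C · (y_{ii}·y_{jj})^{−1/2}. -/
open Matrix

lemma det_le_of_entry_le {n : ℕ} (M : Matrix (Fin n) (Fin n) ℝ) (r s : Fin n → ℝ)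
    (hs : ∀ l, 0 ≤ s l)
    (h : ∀ k l, |M k l| ≤ r k * s l) :
    |M.det| ≤ Nat.factorial n * ((∏ k, r k) * ∏ l, s l) := by
  have habs : ∀ k l, 0 ≤ r k * s l := fun k l => le_trans (abs_nonneg _) (h k l)
  rw [Matrix.det_apply]
  calc |∑ σ : Equiv.Perm (Fin n), Equiv.Perm.sign σ • ∏ i, M (σ i) i|
      ≤ ∑ σ : Equiv.Perm (Fin n), |Equiv.Perm.sign σ • ∏ i, M (σ i) i| :=
        Finset.abs_sum_le_sum_abs _ _
    _ ≤ ∑ _σ : Equiv.Perm (Fin n), ((∏ k, r k) * ∏ l, s l) := by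
        apply Finset.sum_le_sum
        intro σ _
        have h1 : |Equiv.Perm.sign σ • ∏ i, M (σ i) i| = |∏ i, M (σ i) i| := by
          rcases Int.units_eq_one_or (Equiv.Perm.sign σ) with h' | h' <;> simp [h']
        rw [h1, Finset.abs_prod]
        calc (∏ i, |M (σ i) i|) ≤ ∏ i, (r (σ i) * s i) := by
              apply Finset.prod_le_prod (fun i _ => abs_nonneg _) (fun i _ => h _ _)
          _ = (∏ i, r (σ i)) * ∏ i, s i := Finset.prod_mul_distrib
          _ = (∏ k, r k) * ∏ l, s l := by rw [Equiv.prod_comp σ r]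
    _ = Nat.factorial n * ((∏ k, r k) * ∏ l, s l) := by
        rw [Finset.sum_const, Finset.card_univ, Fintype.card_perm, Fintype.card_fin,
          nsmul_eq_mul]

theorem stmt13 (g : ℕ) (hg : 1 ≤ g) (c : ℝ) (hc : 0 < c) :
    ∃ C : ℝ, 0 < C ∧
      ∀ Y : Matrix (Fin g) (Fin g) ℝ, Y.IsSymm → Y.PosDef →
        (∀ i j, i ≠ j → |Y i j| ≤ min (Y i i) (Y j j) / 2) →
        (∏ i : Fin g, Y i i) ≤ c * Y.det →
        ∀ i j, |Y⁻¹ i j| ≤ C / Real.sqrt (Y i i * Y j j) := by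
  refine ⟨c * Nat.factorial g, by positivity, ?_⟩
  intro Y _hsymm hpd hoff hdet i j
  set a : Fin g → ℝ := fun k => Real.sqrt (Y k k) with ha
  have hdiag : ∀ k, 0 < Y k k := by
    intro k
    have hx : (Pi.single k 1 : Fin g → ℝ) ≠ 0 := by
      intro h
      simpa using congrFun h k
    have := hpd.dotProduct_mulVec_pos hx
    simpa [Matrix.mulVec, dotProduct, Pi.single_apply, Finset.sum_ite_eq] using this
  have hapos : ∀ k, 0 < a k := fun k => Real.sqrt_pos.mpr (hdiag k)
  have hasq : ∀ k, a k * a k = Y k k := fun k =>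
    Real.mul_self_sqrt (hdiag k).le
  -- entry bound
  have hentry : ∀ k l, |Y k l| ≤ a k * a l := by
    intro k l
    rcases eq_or_ne k l with rfl | hne
    · rw [hasq, abs_of_pos (hdiag k)]
    · refine le_trans (hoff k l hne) ?_
      have hmin : min (Y k k) (Y l l) ≤ a k * a l := by
        have h1 : min (Y k k) (Y l l) ≤ Real.sqrt (Y k k * Y l l) := by
          rw [Real.le_sqrt (le_min (hdiag k).le (hdiag l).le)
            (mul_nonneg (hdiag k).le (hdiag l).le)]
          calc min (Y k k) (Y l l) ^ 2 = min (Y k k) (Y l l) * min (Y k k) (Y l l) := sq _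
            _ ≤ Y k k * Y l l :=
              mul_le_mul (min_le_left _ _) (min_le_right _ _)
                (le_min (hdiag k).le (hdiag l).le) (hdiag k).le
        rwa [Real.sqrt_mul (hdiag k).le] at h1
      have h0 : (0:ℝ) ≤ min (Y k k) (Y l l) := le_min (hdiag k).le (hdiag l).le
      linarith
  have hdetpos : 0 < Y.det := hpd.det_pos
  -- adjugate bound
  set r : Fin g → ℝ := fun k => if k = j then (a i)⁻¹ else a k with hr
  have hbound : ∀ k l, |(Y.updateRow j (Pi.single i 1)) k l| ≤ r k * a l := by
    intro k l
    rcases eq_or_ne k j with rfl | hne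
    · rw [Matrix.updateRow_self]
      simp only [hr, if_pos rfl]
      rcases eq_or_ne l i with rfl | hl
      · simp [Pi.single_eq_same, inv_mul_cancel₀ (hapos l).ne']
      · simp [Pi.single_eq_of_ne hl, (inv_pos.mpr (hapos i)).le, (hapos l).le,
          mul_nonneg]
    · rw [Matrix.updateRow_ne hne]
      simp only [hr, if_neg hne]
      exact hentry k l
  have hadj : |Y.adjugate i j| ≤ Nat.factorial g * ((∏ k, r k) * ∏ l, a l) := by
    rw [Matrix.adjugate_apply]
    exact det_le_of_entry_le _ r a (fun l => (hapos l).le) hbound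
  have hprodr : (∏ k, r k) = (a i)⁻¹ * (a j)⁻¹ * ∏ k, a k := by
    rw [← Finset.mul_prod_erase Finset.univ r (Finset.mem_univ j),
        ← Finset.mul_prod_erase Finset.univ a (Finset.mem_univ j)]
    simp only [hr, if_pos rfl]
    rw [Finset.prod_congr rfl (fun k hk => if_neg (Finset.ne_of_mem_erase hk))]
    field_simp [(hapos i).ne', (hapos j).ne']
  have hproda : (∏ k, a k) * (∏ k, a k) = ∏ k, Y k k := by
    rw [← Finset.prod_mul_distrib]
    exact Finset.prod_congr rfl (fun k _ => hasq k)
  -- inverse entry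
  have hinv : Y⁻¹ i j = (Y.det)⁻¹ * Y.adjugate i j := by
    rw [Matrix.inv_def, Ring.inverse_eq_inv]
    simp [Matrix.smul_apply, smul_eq_mul]

  have hsqrt : Real.sqrt (Y i i * Y j j) = a i * a j := Real.sqrt_mul (hdiag i).le _
  rw [hinv, hsqrt, le_div_iff₀ (mul_pos (hapos i) (hapos j)), abs_mul, abs_of_pos (inv_pos.mpr hdetpos)]
  have key : |Y.adjugate i j| ≤ Nat.factorial g * ((∏ k, Y k k) * ((a i)⁻¹ * (a j)⁻¹)) := by
    refine hadj.trans (le_of_eq ?_)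
    rw [hprodr]
    rw [← hproda]; ring
  calc (Y.det)⁻¹ * |Y.adjugate i j| * (a i * a j)
      ≤ (Y.det)⁻¹ * (Nat.factorial g * ((∏ k, Y k k) * ((a i)⁻¹ * (a j)⁻¹))) * (a i * a j) := by
        gcongr
    _ = Nat.factorial g * ((∏ k, Y k k) / Y.det) := by
        field_simp [(hapos i).ne', (hapos j).ne', hdetpos.ne']
    _ ≤ Nat.factorial g * c := by
        have : (∏ k, Y k k) / Y.det ≤ c := by
          rw [div_le_iff₀ hdetpos]; linarith
        have hf : (0:ℝ) ≤ Nat.factorial g := Nat.cast_nonneg _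
        nlinarith
    _ = c * Nat.factorial g := by ring
end

section
/- Let g ≥ 1 and let Y = (y_{ij}) be a Minkowski-reduced real symmetric positive definite g×g matrix. Then det Y ≤ ∏_{i=1}^g y_{ii}, and there exists a constant c_g > 0, depending only on g, such that ∏_{i=1}^g y_{ii} ≤ c_g · det Y. -/
set_option maxHeartbeats 1000000
set_option linter.unnecessarySimpa false

open Matrix

/-- A real symmetric positive definite matrix `Y` is Minkowski reduced if
`aᵀ·Y·a ≥ y_{kk}` for every `k` and every integer vector `a` whose entries
`a_k, …, a_g` have gcd `1`, and moreover `y_{k,k+1} ≥ 0` for all `k`. -/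
def MinkowskiReduced {g : ℕ} (Y : Matrix (Fin g) (Fin g) ℝ) : Prop :=
  (∀ (k : Fin g) (a : Fin g → ℤ),
      Finset.gcd (Finset.univ.filter fun l => k ≤ l) a = 1 →
      Y k k ≤ dotProduct (fun i => (a i : ℝ)) (Y.mulVec fun i => (a i : ℝ))) ∧
  ∀ (k : Fin g) (h : (k : ℕ) + 1 < g), 0 ≤ Y k ⟨(k : ℕ) + 1, h⟩

namespace MinkRed

variable {n : ℕ}

/-- the bilinear form -/
def BL (Y : Matrix (Fin n) (Fin n) ℝ) (x y : Fin n → ℝ) : ℝ :=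
  dotProduct x (Y.mulVec y)

/-- quadratic form as a double sum -/
def QF (Y : Matrix (Fin n) (Fin n) ℝ) (x : Fin n → ℝ) : ℝ :=
  ∑ i, ∑ j, Y i j * x i * x j

lemma QF_eq (Y : Matrix (Fin n) (Fin n) ℝ) (x : Fin n → ℝ) :
    QF Y x = BL Y x x := by
  unfold QF BL
  simp only [dotProduct, Matrix.mulVec, Finset.mul_sum]
  exact Finset.sum_congr rfl fun i _ => Finset.sum_congr rfl fun j _ => by ring

lemma BL_add_left (Y : Matrix (Fin n) (Fin n) ℝ) (x x' y : Fin n → ℝ) :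
    BL Y (x + x') y = BL Y x y + BL Y x' y := by
  unfold BL; rw [add_dotProduct]

lemma BL_add_right (Y : Matrix (Fin n) (Fin n) ℝ) (x y y' : Fin n → ℝ) :
    BL Y x (y + y') = BL Y x y + BL Y x y' := by
  unfold BL; rw [Matrix.mulVec_add, dotProduct_add]

lemma BL_smul_left (Y : Matrix (Fin n) (Fin n) ℝ) (c : ℝ) (x y : Fin n → ℝ) :
    BL Y (c • x) y = c * BL Y x y := by
  unfold BL; rw [smul_dotProduct]; rfl

lemma BL_smul_right (Y : Matrix (Fin n) (Fin n) ℝ) (c : ℝ) (x y : Fin n → ℝ) :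
    BL Y x (c • y) = c * BL Y x y := by
  unfold BL; rw [Matrix.mulVec_smul, dotProduct_smul]; rfl

lemma BL_single (Y : Matrix (Fin n) (Fin n) ℝ) (k l : Fin n) :
    BL Y (Pi.single k 1) (Pi.single l 1) = Y k l := by
  unfold BL
  rw [single_dotProduct, Matrix.mulVec_single]
  simp

lemma QF_smul (Y : Matrix (Fin n) (Fin n) ℝ) (c : ℝ) (x : Fin n → ℝ) :
    QF Y (c • x) = c ^ 2 * QF Y x := by
  rw [QF_eq, QF_eq, BL_smul_left, BL_smul_right]; ring

lemma QF_nonneg {Y : Matrix (Fin n) (Fin n) ℝ} (hY : Y.PosSemidef) (x : Fin n → ℝ) :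
    0 ≤ QF Y x := by
  rw [QF_eq]; simpa [BL] using hY.dotProduct_mulVec_nonneg x

lemma QF_pos {Y : Matrix (Fin n) (Fin n) ℝ} (hY : Y.PosDef) {x : Fin n → ℝ} (hx : x ≠ 0) :
    0 < QF Y x := by
  rw [QF_eq]; simpa [BL] using hY.dotProduct_mulVec_pos hx

lemma QF_add_le {Y : Matrix (Fin n) (Fin n) ℝ} (hY : Y.PosSemidef) (x y : Fin n → ℝ) :
    QF Y (x + y) ≤ 2 * QF Y x + 2 * QF Y y := by
  have h1 : QF Y (x + y) + QF Y (x + (-1 : ℝ) • y) = 2 * QF Y x + 2 * QF Y y := by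
    simp only [QF_eq, BL_add_left, BL_add_right, BL_smul_left, BL_smul_right]
    ring
  have h2 : 0 ≤ QF Y (x + (-1 : ℝ) • y) := QF_nonneg hY _
  linarith

lemma red_le {Y : Matrix (Fin n) (Fin n) ℝ} (hR : MinkowskiReduced Y) (k : Fin n)
    (a : Fin n → ℤ) (h : Finset.gcd (Finset.univ.filter fun l => k ≤ l) a = 1) :
    Y k k ≤ QF Y (fun i => (a i : ℝ)) := by
  rw [QF_eq]; exact hR.1 k a h

/-- if some entry with index `≥ k` is a unit, the gcd condition holds -/
lemma gcd_eq_one_of_unit {k : Fin n} {a : Fin n → ℤ} {l : Fin n} (hl : k ≤ l)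
    (hu : a l = 1 ∨ a l = -1) :
    Finset.gcd (Finset.univ.filter fun l => k ≤ l) a = 1 := by
  set s := Finset.univ.filter fun l' : Fin n => k ≤ l' with hs
  have hmem : l ∈ s := by simp [hs, hl]
  have hdvd : s.gcd a ∣ a l := Finset.gcd_dvd hmem
  have hunit : IsUnit (s.gcd a) := by
    rcases hu with h | h
    · rw [h] at hdvd; exact isUnit_of_dvd_one hdvd
    · rw [h] at hdvd; exact isUnit_of_dvd_unit hdvd ⟨⟨-1, -1, by ring, by ring⟩, rfl⟩
  rcases Int.isUnit_iff.mp hunit with h | h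
  · exact h
  · exfalso
    have hnorm := Finset.normalize_gcd (s := s) (f := a)
    rw [h] at hnorm
    exact absurd hnorm (by decide)

lemma diag_pos {Y : Matrix (Fin n) (Fin n) ℝ} (hY : Y.PosDef) (k : Fin n) : 0 < Y k k := by
  have h := hY.dotProduct_mulVec_pos (x := (Pi.single k 1 : Fin n → ℝ)) (by
    intro h
    have := congrFun h k
    simp [Pi.single_apply] at this)
  have : dotProduct (star (Pi.single k 1 : Fin n → ℝ)) (Y.mulVec (Pi.single k 1)) = Y k k := by
    simpa [star_trivial] using BL_single Y k k
  rwa [this] at h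

/-- the cast of a single integer vector -/
lemma cast_single (k : Fin n) (c : ℤ) :
    (fun i => (((Pi.single k c : Fin n → ℤ)) i : ℝ)) = (c : ℝ) • (Pi.single k 1 : Fin n → ℝ) := by
  funext i
  by_cases h : i = k
  · subst h; simp
  · simp [Pi.single_apply, h]

/-- the diagonal of a reduced matrix is monotone -/
lemma diag_mono {Y : Matrix (Fin n) (Fin n) ℝ} (hR : MinkowskiReduced Y) {k l : Fin n}
    (hkl : k ≤ l) : Y k k ≤ Y l l := by
  have h := red_le hR k (Pi.single l 1) (gcd_eq_one_of_unit hkl (by simp))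
  have heq : QF Y (fun i => (((Pi.single l 1 : Fin n → ℤ)) i : ℝ)) = Y l l := by
    rw [cast_single, QF_smul, QF_eq, BL_single]
    norm_num
  rwa [heq] at h

/-- off-diagonal bound : `2 * |Y k l| ≤ Y k k` for `k < l`, using symmetry -/
lemma offdiag_bound {Y : Matrix (Fin n) (Fin n) ℝ} (hS : Y.IsSymm) (hR : MinkowskiReduced Y)
    {k l : Fin n} (hkl : k < l) : 2 * |Y k l| ≤ Y k k := by
  have hsym : Y l k = Y k l := by
    have := congrFun (congrFun hS k) l
    simpa [Matrix.transpose_apply] using this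
  have key : ∀ ε : ℤ, ε = 1 ∨ ε = -1 →
      Y l l ≤ Y k k + 2 * (ε : ℝ) * Y k l + Y l l := by
    intro ε hε
    have hne : k ≠ l := Fin.ne_of_lt hkl
    have h := red_le hR l (Pi.single k ε + Pi.single l 1)
      (gcd_eq_one_of_unit le_rfl (by simp [Pi.single_apply, hne.symm]))
    have hveq : (fun i => (((Pi.single k ε + Pi.single l 1 : Fin n → ℤ)) i : ℝ))
        = (ε : ℝ) • (Pi.single k 1 : Fin n → ℝ) + (Pi.single l 1 : Fin n → ℝ) := by
      funext i
      by_cases h1 : i = k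
      · subst h1; simp [Pi.single_apply, hne]
      · by_cases h2 : i = l
        · subst h2; simp [Pi.single_apply, Ne.symm hne, h1]
        · simp [Pi.single_apply, h1, h2]
    rw [hveq] at h
    have hexp : QF Y ((ε : ℝ) • (Pi.single k 1 : Fin n → ℝ) + (Pi.single l 1 : Fin n → ℝ))
        = (ε:ℝ)^2 * Y k k + 2 * (ε:ℝ) * Y k l + Y l l := by
      rw [QF_eq]
      simp only [BL_add_left, BL_add_right, BL_smul_left, BL_smul_right, BL_single]
      rw [hsym]; ring
    rw [hexp] at h
    rcases hε with h1 | h1 <;> subst h1 <;> push_cast at h ⊢ <;> linarith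
  have h1 := key 1 (Or.inl rfl)
  have h2 := key (-1) (Or.inr rfl)
  push_cast at h1 h2
  rcases abs_cases (Y k l) with ⟨he, _⟩ | ⟨he, _⟩ <;> rw [he] <;> linarith


/-- `Y 0 0` is at most the value of the form at any nonzero integer vector -/
lemma red_min {Y : Matrix (Fin n) (Fin n) ℝ} (hn : 0 < n) (hY : Y.PosSemidef)
    (hR : MinkowskiReduced Y) (a : Fin n → ℤ) (ha : a ≠ 0) :
    Y ⟨0, hn⟩ ⟨0, hn⟩ ≤ QF Y (fun i => (a i : ℝ)) := by
  set k0 : Fin n := ⟨0, hn⟩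
  have hfil : (Finset.univ.filter fun l : Fin n => k0 ≤ l) = Finset.univ :=
    Finset.filter_true_of_mem fun l _ => by simp [k0, Fin.le_def]
  set d : ℤ := Finset.gcd Finset.univ a with hd
  have hd0 : d ≠ 0 := by
    intro h
    apply ha
    funext i
    exact Finset.gcd_eq_zero_iff.mp h i (Finset.mem_univ i)
  have hdvd : ∀ i, d ∣ a i := fun i => Finset.gcd_dvd (Finset.mem_univ i)
  set b : Fin n → ℤ := fun i => a i / d with hb
  have hab : ∀ i, a i = d * b i := by
    intro i
    rw [hb, mul_comm]
    exact (Int.ediv_mul_cancel (hdvd i)).symm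
  have hgb : Finset.gcd Finset.univ b = 1 := by
    have h1 : Finset.gcd Finset.univ (fun i => d * b i) = normalize d * Finset.gcd Finset.univ b :=
      Finset.gcd_mul_left
    have h2 : (Finset.gcd Finset.univ fun i => d * b i) = d := by
      rw [show (fun i => d * b i) = a from funext fun i => (hab i).symm]
    have h3 : normalize d = d := Finset.normalize_gcd
    rw [h2, h3] at h1
    have h4 : d * Finset.univ.gcd b = d * 1 := by rw [← h1, mul_one]
    exact mul_left_cancel₀ hd0 h4
  have hred := red_le hR k0 b (by rw [hfil]; exact hgb)
  have hcast : (fun i => (a i : ℝ)) = (d : ℝ) • (fun i => (b i : ℝ)) := by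
    funext i
    rw [hab i]
    push_cast
    rfl
  have hQa : QF Y (fun i => (a i : ℝ)) = (d:ℝ)^2 * QF Y (fun i => (b i : ℝ)) := by
    rw [hcast, QF_smul]
  have hd1 : (1:ℝ) ≤ (d:ℝ)^2 := by
    have h1 : (1:ℤ) ≤ d^2 := by nlinarith [Int.one_le_abs hd0, sq_abs d, abs_nonneg d]
    exact_mod_cast h1
  have hQb := QF_nonneg hY (fun i => (b i : ℝ))
  nlinarith [hred, hQb, hQa, hd1]

/-- simultaneous Dirichlet approximation via pigeonhole -/
lemma dirichlet (x : Fin n → ℝ) (N : ℕ) (hN : 0 < N) :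
    ∃ (q : ℕ) (a : Fin n → ℤ), 1 ≤ q ∧ q ≤ N ^ n ∧
      ∀ i, |(q : ℝ) * x i - (a i : ℝ)| ≤ 1 / N := by
  have hN' : (0:ℝ) < N := by exact_mod_cast hN
  set G : ℕ → (Fin n → Fin N) := fun k i =>
    ⟨(⌊(N:ℝ) * Int.fract ((k:ℝ) * x i)⌋).toNat, by
      have h0 : (0:ℝ) ≤ Int.fract ((k:ℝ) * x i) := Int.fract_nonneg _
      have h1 : Int.fract ((k:ℝ) * x i) < 1 := Int.fract_lt_one _
      have h2 : (⌊(N:ℝ) * Int.fract ((k:ℝ) * x i)⌋ : ℝ) ≤ (N:ℝ) * Int.fract ((k:ℝ) * x i) :=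
        Int.floor_le _
      have h3 : (N:ℝ) * Int.fract ((k:ℝ) * x i) < N := by nlinarith
      have h4 : ⌊(N:ℝ) * Int.fract ((k:ℝ) * x i)⌋ < (N:ℤ) := by exact_mod_cast lt_of_le_of_lt h2 h3
      omega⟩ with hG
  have hcard : (Fintype.card (Fin n → Fin N)) < (Finset.range (N ^ n + 1)).card := by
    simp [Fintype.card_fun]
  obtain ⟨k1, hk1, k2, hk2, hne, heq⟩ :=
    Finset.exists_ne_map_eq_of_card_lt_of_maps_to hcard (fun k _ => Finset.mem_univ (G k))
  wlog hlt : k1 < k2 generalizing k1 k2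
  · exact this k2 hk2 k1 hk1 hne.symm heq.symm (by omega)
  refine ⟨k2 - k1, fun i => ⌊(k2:ℝ) * x i⌋ - ⌊(k1:ℝ) * x i⌋, by omega,
    by simp at hk1 hk2; omega, ?_⟩
  intro i
  have hfe : ⌊(N:ℝ) * Int.fract ((k1:ℝ) * x i)⌋ = ⌊(N:ℝ) * Int.fract ((k2:ℝ) * x i)⌋ := by
    have h := congrFun heq i
    have h1 : (⌊(N:ℝ) * Int.fract ((k1:ℝ) * x i)⌋).toNat = (⌊(N:ℝ) * Int.fract ((k2:ℝ) * x i)⌋).toNat := by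
      simpa [hG] using congrArg Fin.val h
    have hp1 : 0 ≤ ⌊(N:ℝ) * Int.fract ((k1:ℝ) * x i)⌋ :=
      Int.floor_nonneg.mpr (mul_nonneg (le_of_lt hN') (Int.fract_nonneg _))
    have hp2 : 0 ≤ ⌊(N:ℝ) * Int.fract ((k2:ℝ) * x i)⌋ :=
      Int.floor_nonneg.mpr (mul_nonneg (le_of_lt hN') (Int.fract_nonneg _))
    omega
  set f1 := Int.fract ((k1:ℝ) * x i)
  set f2 := Int.fract ((k2:ℝ) * x i)
  have hb1 : (⌊(N:ℝ) * f1⌋ : ℝ) ≤ (N:ℝ) * f1 := Int.floor_le _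
  have hb1' : (N:ℝ) * f1 < ⌊(N:ℝ) * f1⌋ + 1 := Int.lt_floor_add_one _
  have hb2 : (⌊(N:ℝ) * f2⌋ : ℝ) ≤ (N:ℝ) * f2 := Int.floor_le _
  have hb2' : (N:ℝ) * f2 < ⌊(N:ℝ) * f2⌋ + 1 := Int.lt_floor_add_one _
  have hdiff : |f1 - f2| ≤ 1 / N := by
    rw [hfe] at hb1 hb1'
    have h5 : f2 - f1 ≤ 1/N := by
      rw [← sub_nonneg]
      have : (1/N - (f2 - f1)) * N = 1 - N * f2 + N * f1 := by
        field_simp; ring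
      nlinarith
    have h6 : f1 - f2 ≤ 1/N := by
      rw [← sub_nonneg]
      have : (1/N - (f1 - f2)) * N = 1 - N * f1 + N * f2 := by
        field_simp; ring
      nlinarith
    rw [abs_le]
    constructor <;> linarith
  have hkey : (((k2 - k1 : ℕ)) : ℝ) * x i - ((⌊(k2:ℝ) * x i⌋ - ⌊(k1:ℝ) * x i⌋ : ℤ) : ℝ)
      = f2 - f1 := by
    have hc : (((k2 - k1 : ℕ)) : ℝ) = (k2:ℝ) - (k1:ℝ) := by
      have : k1 ≤ k2 := le_of_lt hlt
      push_cast [Nat.cast_sub this]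
      ring
    rw [hc]
    show _ = Int.fract ((k2:ℝ) * x i) - Int.fract ((k1:ℝ) * x i)
    rw [← Int.self_sub_floor, ← Int.self_sub_floor]
    push_cast
    ring
  rw [hkey]
  rw [abs_sub_comm] at hdiff
  exact hdiff

/-- all entries of a reduced symmetric positive definite matrix are bounded by `M` -/
lemma entry_bound {Y : Matrix (Fin n) (Fin n) ℝ} (hS : Y.IsSymm) (hY : Y.PosDef)
    (hR : MinkowskiReduced Y) {M : ℝ} (hM : ∀ k, Y k k ≤ M) (i j : Fin n) :
    |Y i j| ≤ M := by
  rcases lt_trichotomy i j with h | h | h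
  · have := offdiag_bound hS hR h
    have h2 := diag_pos hY i
    have := hM i
    have := abs_nonneg (Y i j)
    linarith
  · subst h
    have h2 := diag_pos hY i
    rw [abs_of_pos h2]
    exact hM i
  · have hsym : Y i j = Y j i := by
      have := congrFun (congrFun hS j) i
      simpa [Matrix.transpose_apply] using this
    rw [hsym]
    have := offdiag_bound hS hR h
    have h2 := diag_pos hY j
    have := hM j
    have := abs_nonneg (Y j i)
    linarith

/-- crude upper bound on the quadratic form in terms of a sup bound on the vector -/
lemma QF_upper {Y : Matrix (Fin n) (Fin n) ℝ} {M η : ℝ} (hent : ∀ i j, |Y i j| ≤ M)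
    (hM0 : 0 ≤ M) (hη : 0 ≤ η) (e : Fin n → ℝ) (he : ∀ i, |e i| ≤ η) :
    QF Y e ≤ (n:ℝ)^2 * M * η^2 := by
  have hstep : QF Y e ≤ ∑ _i : Fin n, ∑ _j : Fin n, M * η * η := by
    unfold QF
    refine Finset.sum_le_sum fun i _ => Finset.sum_le_sum fun j _ => ?_
    have h1 : Y i j * e i * e j ≤ |Y i j * e i * e j| := le_abs_self _
    have h2 : |Y i j * e i * e j| = |Y i j| * |e i| * |e j| := by
      rw [abs_mul, abs_mul]
    have a1 : |Y i j| * |e i| ≤ M * η := mul_le_mul (hent i j) (he i) (abs_nonneg _) hM0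
    have a2 : |Y i j| * |e i| * |e j| ≤ M * η * η :=
      mul_le_mul a1 (he j) (abs_nonneg _) (by positivity)
    linarith
  have hsum : ∑ _i : Fin n, ∑ _j : Fin n, M * η * η = (n:ℝ)^2 * M * η^2 := by
    simp [Finset.sum_const, Finset.card_univ]
    ring
  linarith [hstep, hsum.le, hsum.ge]

/-- The key "no gap" lemma: if the smallest diagonal entry is comparable to the
largest one, the quadratic form is bounded below by a multiple of the identity. -/
lemma nogap (hn : 0 < n) {Y : Matrix (Fin n) (Fin n) ℝ} (hS : Y.IsSymm) (hY : Y.PosDef)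
    (hR : MinkowskiReduced Y) {τ M : ℝ} (hτ0 : 0 < τ)
    (hM : ∀ k, Y k k ≤ M) (h00 : τ * M ≤ Y ⟨0, hn⟩ ⟨0, hn⟩)
    (N : ℕ) (hN0 : 0 < N) (hNn : (n:ℝ) < (N:ℝ)^2) (hN2 : 4 * (n:ℝ)^2 ≤ τ * (N:ℝ)^2)
    (x : Fin n → ℝ) :
    τ / (8 * (N:ℝ) ^ (2*n)) * (M * ∑ i, x i ^ 2) ≤ QF Y x := by
  have hN' : (0:ℝ) < N := by exact_mod_cast hN0
  have hM0 : 0 < M := lt_of_lt_of_le (diag_pos hY ⟨0, hn⟩) (hM _)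
  set δ : ℝ := τ / (8 * (N:ℝ) ^ (2*n)) with hδ
  have hδ0 : 0 < δ := by positivity
  set S : ℝ := ∑ i, x i ^ 2 with hSdef
  have hS0 : 0 ≤ S := Finset.sum_nonneg fun i _ => sq_nonneg _
  rcases eq_or_lt_of_le hS0 with hSz | hSpos
  · -- x = 0
    have : δ * (M * S) = 0 := by rw [← hSz]; ring
    rw [this]
    exact QF_nonneg hY.posSemidef x
  by_contra hcon
  push_neg at hcon
  -- normalize x
  set s : ℝ := Real.sqrt S with hs
  have hspos : 0 < s := Real.sqrt_pos.mpr hSpos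
  have hs2 : s^2 = S := Real.sq_sqrt (le_of_lt hSpos)
  set u : Fin n → ℝ := s⁻¹ • x with hu
  have hu2 : ∑ i, u i ^ 2 = 1 := by
    rw [hu]
    have : ∀ i, (s⁻¹ • x) i ^ 2 = s⁻¹^2 * x i ^2 := fun i => by
      simp [Pi.smul_apply, smul_eq_mul]; ring
    rw [Finset.sum_congr rfl fun i _ => this i, ← Finset.mul_sum, ← hSdef, ← hs2]
    field_simp
  have hQu : QF Y u < δ * M := by
    have h1 : QF Y u = s⁻¹^2 * QF Y x := by rw [hu, QF_smul]
    have h2 : s⁻¹^2 * QF Y x < s⁻¹^2 * (δ * (M * S)) := by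
      apply mul_lt_mul_of_pos_left hcon
      positivity
    rw [h1]
    have h3 : s⁻¹^2 * (δ * (M * S)) = δ * M := by
      rw [← hs2]; field_simp
    linarith [h2, h3.le, h3.ge]
  -- Dirichlet approximation
  obtain ⟨q, a, hq1, hqN, happ⟩ := dirichlet u N hN0
  set e : Fin n → ℝ := fun i => (q:ℝ) * u i - (a i : ℝ) with he
  have hea : ∀ i, |e i| ≤ 1/N := happ
  -- a ≠ 0
  have ha0 : a ≠ 0 := by
    intro h
    have hq2 : (1:ℝ) ≤ (q:ℝ)^2 := by
      have : (1:ℝ) ≤ (q:ℝ) := by exact_mod_cast hq1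
      nlinarith
    have hbound : ∀ i, (q:ℝ)^2 * u i ^2 ≤ 1/(N:ℝ)^2 := by
      intro i
      have this : |(q:ℝ) * u i| ≤ 1/N := by
        have h0 : |(q:ℝ) * u i - ((a i : ℤ) : ℝ)| ≤ 1/N := hea i
        have hz : ((a i : ℤ) : ℝ) = 0 := by rw [h]; simp
        rwa [hz, sub_zero] at h0
      have h2 : ((q:ℝ) * u i)^2 ≤ (1/(N:ℝ))^2 := by
        have h3 := pow_le_pow_left₀ (abs_nonneg ((q:ℝ) * u i)) this 2
        rwa [sq_abs] at h3
      calc (q:ℝ)^2 * u i ^2 = ((q:ℝ) * u i)^2 := by ring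
        _ ≤ (1/(N:ℝ))^2 := h2
        _ = 1/(N:ℝ)^2 := by rw [div_pow]; norm_num
    have hsum : (q:ℝ)^2 = ∑ i, (q:ℝ)^2 * u i ^ 2 := by
      rw [← Finset.mul_sum, hu2, mul_one]
    have : (q:ℝ)^2 ≤ (n:ℝ) * (1/(N:ℝ)^2) := by
      rw [hsum]
      calc ∑ i, (q:ℝ)^2 * u i ^2 ≤ ∑ _i : Fin n, 1/(N:ℝ)^2 :=
            Finset.sum_le_sum fun i _ => hbound i
        _ = (n:ℝ) * (1/(N:ℝ)^2) := by simp [Finset.sum_const, Finset.card_univ]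
    have hcontra : (n:ℝ) * (1/(N:ℝ)^2) < 1 := by
      rw [mul_one_div, div_lt_one (by positivity)]
      exact hNn
    linarith
  -- lower bound by reduction
  have hmin := red_min hn hY.posSemidef hR a ha0
  -- upper bound
  have hcast : (fun i => (a i : ℝ)) = (q:ℝ) • u + (-1:ℝ) • e := by
    funext i
    simp [he, Pi.smul_apply, smul_eq_mul]
  have hsplit : QF Y (fun i => (a i : ℝ)) ≤ 2 * QF Y ((q:ℝ) • u) + 2 * QF Y ((-1:ℝ) • e) := by
    rw [hcast]
    exact QF_add_le hY.posSemidef _ _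
  have hq2N : (q:ℝ)^2 ≤ (N:ℝ)^(2*n) := by
    have h1 : (q:ℝ) ≤ (N:ℝ)^n := by exact_mod_cast hqN
    have h2 : (0:ℝ) ≤ (q:ℝ) := by positivity
    calc (q:ℝ)^2 ≤ ((N:ℝ)^n)^2 := by nlinarith
      _ = (N:ℝ)^(2*n) := by rw [← pow_mul, mul_comm]
  have hQqu : QF Y ((q:ℝ) • u) < (N:ℝ)^(2*n) * (δ * M) := by
    rw [QF_smul]
    have hQu0 : 0 ≤ QF Y u := QF_nonneg hY.posSemidef u
    have h1 : (q:ℝ)^2 * QF Y u ≤ (N:ℝ)^(2*n) * QF Y u := by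
      apply mul_le_mul_of_nonneg_right hq2N hQu0
    have h2 : (N:ℝ)^(2*n) * QF Y u < (N:ℝ)^(2*n) * (δ * M) := by
      apply mul_lt_mul_of_pos_left hQu (by positivity)
    linarith
  have hQe : QF Y ((-1:ℝ) • e) ≤ (n:ℝ)^2 * M * (1/N)^2 := by
    rw [QF_smul]
    have := QF_upper (entry_bound hS hY hR hM) (le_of_lt hM0) (by positivity : (0:ℝ) ≤ 1/N) e hea
    nlinarith [this]
  -- combine
  have hNδ : (N:ℝ)^(2*n) * (δ * M) = τ * M / 8 := by
    rw [hδ]; field_simp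
  have hlast : (n:ℝ)^2 * M * (1/N)^2 ≤ τ * M / 4 := by
    have h1 : (n:ℝ)^2 * M * (1/N)^2 = (n:ℝ)^2 * M / (N:ℝ)^2 := by
      field_simp
    rw [h1, div_le_div_iff₀ (by positivity) (by norm_num : (0:ℝ) < 4)]
    nlinarith
  have : τ * M ≤ 2 * ((N:ℝ)^(2*n) * (δ * M)) + 2 * ((n:ℝ)^2 * M * (1/N)^2) := by
    calc τ * M ≤ Y ⟨0, hn⟩ ⟨0, hn⟩ := h00
      _ ≤ QF Y (fun i => (a i : ℝ)) := hmin
      _ ≤ 2 * QF Y ((q:ℝ) • u) + 2 * QF Y ((-1:ℝ) • e) := hsplit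
      _ ≤ _ := by linarith [hQqu, hQe]
  rw [hNδ] at this
  nlinarith [hM0, hτ0]


/-! ### Submatrix machinery -/

/-- extension by zero of a vector along a map of index sets -/
def ext {m : ℕ} {α : Type*} [AddCommMonoid α] (f : Fin m → Fin n) (x : Fin m → α) :
    Fin n → α :=
  fun j => ∑ i, if f i = j then x i else 0

lemma ext_apply {m : ℕ} {α : Type*} [AddCommMonoid α] {f : Fin m → Fin n}
    (hf : Function.Injective f) (x : Fin m → α) (i : Fin m) : ext f x (f i) = x i := by
  unfold ext
  rw [Finset.sum_eq_single i]
  · simp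
  · intro b _ hb
    rw [if_neg (fun h => hb (hf h))]
  · simp

lemma ext_apply_zero {m : ℕ} {α : Type*} [AddCommMonoid α] {f : Fin m → Fin n}
    (x : Fin m → α) (j : Fin n) (hj : ∀ i, f i ≠ j) : ext f x j = 0 :=
  Finset.sum_eq_zero fun i _ => by simp [hj i]

lemma ext_cast {m : ℕ} (f : Fin m → Fin n) (a : Fin m → ℤ) :
    (fun j => ((ext f a j : ℤ) : ℝ)) = ext f (fun i => (a i : ℝ)) := by
  funext j
  unfold ext
  push_cast [apply_ite (fun z : ℤ => (z : ℝ))]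
  rfl

lemma sum_ext {m : ℕ} {f : Fin m → Fin n} (F : Fin n → ℝ) (x : Fin m → ℝ) :
    ∑ j, F j * ext f x j = ∑ i, F (f i) * x i := by
  unfold ext
  have h1 : ∀ j, F j * ∑ i, (if f i = j then x i else 0)
      = ∑ i, (if f i = j then F (f i) * x i else 0) := by
    intro j
    rw [Finset.mul_sum]
    refine Finset.sum_congr rfl fun i _ => ?_
    by_cases h : f i = j <;> simp [h]
  rw [Finset.sum_congr rfl fun j _ => h1 j, Finset.sum_comm]
  refine Finset.sum_congr rfl fun i _ => ?_
  simp

lemma QF_submatrix {m : ℕ} (Y : Matrix (Fin n) (Fin n) ℝ) {f : Fin m → Fin n}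
    (hf : Function.Injective f) (x : Fin m → ℝ) :
    QF (Y.submatrix f f) x = QF Y (ext f x) := by
  unfold QF
  have h1 : ∀ j : Fin n, ∑ j', Y j j' * ext f x j * ext f x j'
      = ext f x j * ∑ i', Y j (f i') * x i' := by
    intro j
    rw [← sum_ext (fun j' => Y j j') x]
    rw [Finset.mul_sum]
    refine Finset.sum_congr rfl fun j' _ => by ring
  rw [Finset.sum_congr rfl fun j _ => h1 j]
  have h2 : ∑ j, ext f x j * ∑ i', Y j (f i') * x i'
      = ∑ j, (fun j => ∑ i', Y j (f i') * x i') j * ext f x j := by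
    refine Finset.sum_congr rfl fun j _ => by ring
  rw [h2, sum_ext (fun j => ∑ i', Y j (f i') * x i') x]
  refine Finset.sum_congr rfl fun i _ => ?_
  rw [Finset.sum_mul]
  refine Finset.sum_congr rfl fun i' _ => ?_
  simp only [Matrix.submatrix_apply]
  ring

lemma ext_ne_zero {m : ℕ} {f : Fin m → Fin n} (hf : Function.Injective f)
    {x : Fin m → ℝ} (hx : x ≠ 0) : ext f x ≠ 0 := by
  intro h
  apply hx
  funext i
  have := congrFun h (f i)
  rw [ext_apply hf] at this
  simpa using this

/-- transfer of positive definiteness to a submatrix -/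
lemma posdef_submatrix {m : ℕ} {Y : Matrix (Fin n) (Fin n) ℝ} (hY : Y.PosDef)
    {f : Fin m → Fin n} (hf : Function.Injective f) : (Y.submatrix f f).PosDef := by
  refine Matrix.PosDef.of_dotProduct_mulVec_pos ?_ ?_
  · exact hY.1.submatrix f
  · intro x hx
    have h1 : 0 < QF (Y.submatrix f f) x := by
      rw [QF_submatrix Y hf x]
      exact QF_pos hY (ext_ne_zero hf hx)
    rw [QF_eq] at h1
    simpa [BL] using h1

lemma issymm_submatrix {m : ℕ} {Y : Matrix (Fin n) (Fin n) ℝ} (hS : Y.IsSymm)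
    (f : Fin m → Fin n) : (Y.submatrix f f).IsSymm := by
  unfold Matrix.IsSymm
  rw [Matrix.transpose_submatrix, hS]

/-- transfer of the gcd condition through an extension by zero -/
lemma gcd_ext {m : ℕ} {f : Fin m → Fin n} (hf : StrictMono f) (k : Fin m) (a : Fin m → ℤ) :
    Finset.gcd (Finset.univ.filter fun l => f k ≤ l) (ext f a)
      = Finset.gcd (Finset.univ.filter fun l => k ≤ l) a := by
  classical
  have hinj : Function.Injective f := hf.injective
  rw [Finset.gcd_eq_gcd_filter_ne_zero]
  have hset : ((Finset.univ.filter fun l => f k ≤ l).filter fun j => ext f a j ≠ 0)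
      = (((Finset.univ.filter fun l => k ≤ l).filter fun i => a i ≠ 0).image f) := by
    ext j
    simp only [Finset.mem_filter, Finset.mem_image, Finset.mem_univ, true_and]
    constructor
    · rintro ⟨hkj, hj⟩
      by_cases hrange : ∃ i, f i = j
      · obtain ⟨i, hi⟩ := hrange
        refine ⟨i, ⟨?_, ?_⟩, hi⟩
        · rw [← hi] at hkj
          exact (hf.le_iff_le).mp hkj
        · intro h0
          apply hj
          rw [← hi, ext_apply hinj, h0]
      · push_neg at hrange
        exact absurd (ext_apply_zero a j hrange) hj
    · rintro ⟨i, ⟨hki, hai⟩, hij⟩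
      subst hij
      exact ⟨(hf.le_iff_le).mpr hki, by rwa [ext_apply hinj]⟩
  rw [hset, Finset.gcd_image]
  have : (fun i => ext f a (f i)) = a := funext fun i => ext_apply hinj a i
  rw [show ext f a ∘ f = a from funext fun i => ext_apply hinj a i]
  exact (Finset.gcd_eq_gcd_filter_ne_zero).symm

/-- transfer of Minkowski reducedness to a "consecutive" submatrix -/
lemma reduced_submatrix {m : ℕ} {Y : Matrix (Fin n) (Fin n) ℝ} (hR : MinkowskiReduced Y)
    {f : Fin m → Fin n} (hf : StrictMono f)
    (hstep : ∀ (i : ℕ) (h1 : i + 1 < m), (f ⟨i + 1, h1⟩ : ℕ) = (f ⟨i, by omega⟩ : ℕ) + 1) :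
    MinkowskiReduced (Y.submatrix f f) := by
  constructor
  · intro k a hgcd
    have h1 : Finset.gcd (Finset.univ.filter fun l => f k ≤ l) (ext f a) = 1 := by
      rw [gcd_ext hf k a]; exact hgcd
    have h2 := red_le hR (f k) (ext f a) h1
    have h3 : QF Y (fun i => ((ext f a i : ℤ) : ℝ)) = QF (Y.submatrix f f) (fun i => (a i : ℝ)) := by
      rw [ext_cast, ← QF_submatrix Y hf.injective]
    rw [h3, QF_eq] at h2
    exact h2
  · intro k h
    have hlt : (f ⟨(k : ℕ) + 1, h⟩ : ℕ) < n := (f ⟨(k : ℕ) + 1, h⟩).isLt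
    have hs := hstep k h
    have h2 : (f k : ℕ) + 1 < n := by
      rw [← hs]
      convert hlt using 3
    have := hR.2 (f k) h2
    have heq : (⟨(f k : ℕ) + 1, h2⟩ : Fin n) = f ⟨(k : ℕ) + 1, h⟩ := by
      apply Fin.ext
      simp [hs]
    rw [heq] at this
    simpa [Matrix.submatrix_apply] using this

/-- splitting a sum over `Fin n` at a cut point -/
lemma sum_split {a b : ℕ} (h : n = a + b) (F : Fin n → ℝ) :
    ∑ p, F p = (∑ i : Fin a, F ⟨i, by omega⟩) + ∑ j : Fin b, F ⟨a + j, by omega⟩ := by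
  subst h
  rw [Fin.sum_univ_add]
  rfl


/-- 2x2 positivity bound for cross terms -/
lemma pair_bound {yii yjj yij s : ℝ} (hyii : 0 < yii) (hyjj : 0 < yjj) (hs : 0 < s)
    (hoff : 2 * |yij| ≤ yii) (hgap : yii ≤ s^2 * yjj) (xi xj : ℝ) :
    -(s * (yii * xi^2 + yjj * xj^2)) ≤ 2 * (yij * xi * xj) := by
  have hb2 : yij^2 ≤ s^2 * yii * yjj := by
    nlinarith [hoff, hgap, hyii.le, sq_abs yij, abs_nonneg yij, sq_nonneg yij, hyjj.le]
  have hkey : 0 ≤ s * yii * xi^2 + 2 * (yij * xi * xj) + s * yjj * xj^2 := by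
    nlinarith [sq_nonneg (s * yii * xi + yij * xj), mul_nonneg (sub_nonneg.mpr hb2) (sq_nonneg xj),
      mul_pos hs hyii, sq_nonneg xi, sq_nonneg xj]
  nlinarith [hkey]

/-- The main lower bound : a uniform constant comparing a Minkowski reduced form
with the diagonal form. -/
lemma main_lb (n : ℕ) : ∃ d : ℝ, 0 < d ∧ d ≤ 1 ∧ ∀ m, m ≤ n →
    ∀ Y : Matrix (Fin m) (Fin m) ℝ, Y.IsSymm → Y.PosDef → MinkowskiReduced Y →
    ∀ x : Fin m → ℝ, d * ∑ i, Y i i * x i ^ 2 ≤ QF Y x := by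
  induction n with
  | zero =>
    refine ⟨1, by norm_num, le_refl 1, fun m hm Y hS hY hR x => ?_⟩
    interval_cases m
    simp [QF]
  | succ n IH =>
    obtain ⟨d, hd0, hd1, IH⟩ := IH
    set s : ℝ := d / (2 * (n + 1)) with hs_def
    have hs0 : 0 < s := by positivity
    have hs1 : s ≤ 1 / 2 := by
      rw [hs_def, div_le_div_iff₀ (by positivity) (by norm_num)]
      nlinarith [Nat.cast_nonneg (α := ℝ) n]
    set t : ℝ := s ^ 2 with ht_def
    have ht0 : 0 < t := by positivity
    have ht1 : t ≤ 1 := by nlinarith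
    set τ : ℝ := t ^ n with hτ_def
    have hτ0 : 0 < τ := by positivity
    have hτ1 : τ ≤ 1 := pow_le_one₀ ht0.le ht1
    set N : ℕ := (n + 2) + ⌈(4 * ((n+1):ℝ)^2) / τ⌉₊ with hN_def
    have hN0 : 0 < N := by omega
    have hNcast : ((n:ℝ) + 2) ≤ (N:ℝ) := by
      rw [hN_def]
      push_cast
      nlinarith [Nat.cast_nonneg (α := ℝ) ⌈(4 * ((n+1):ℝ)^2) / τ⌉₊]
    have hNceil : (4 * ((n+1):ℝ)^2) / τ ≤ (N:ℝ) := by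
      rw [hN_def]
      push_cast
      nlinarith [Nat.le_ceil ((4 * ((n+1):ℝ)^2) / τ), Nat.cast_nonneg (α := ℝ) n]
    have hN1 : (1:ℝ) ≤ (N:ℝ) := by nlinarith [Nat.cast_nonneg (α := ℝ) n]
    set δE : ℝ := τ / (8 * (N:ℝ) ^ (2 * (n + 1))) with hδE_def
    have hδE0 : 0 < δE := by positivity
    refine ⟨min (d / 2) δE, lt_min (by positivity) hδE0,
      le_trans (min_le_left _ _) (by linarith), fun m hm Y hS hY hR x => ?_⟩
    set d' : ℝ := min (d / 2) δE with hd'_def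
    have hd'0 : 0 < d' := lt_min (by positivity) hδE0
    have hSdiag_nonneg : 0 ≤ ∑ i, Y i i * x i ^ 2 :=
      Finset.sum_nonneg fun i _ => mul_nonneg (diag_pos hY i).le (sq_nonneg _)
    rcases Nat.eq_zero_or_pos m with hm0 | hm0
    · subst hm0
      simp [QF]
    by_cases hgap : ∃ p q : Fin m, (q:ℕ) = (p:ℕ) + 1 ∧ Y p p ≤ t * Y q q
    · -- gap case : split into two blocks
      obtain ⟨p, q, hpq, hple⟩ := hgap
      set a : ℕ := (p:ℕ) + 1 with ha_def
      set b : ℕ := m - a with hb_def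
      have hab : m = a + b := by
        have := q.isLt
        omega
      have ha0 : 0 < a := by omega
      have hb0 : 0 < b := by
        have := q.isLt
        omega
      have ham : a ≤ n := by
        have := q.isLt
        omega
      have hbm : b ≤ n := by omega
      set fA : Fin a → Fin m := fun i => ⟨i, by omega⟩ with hfA_def
      set fB : Fin b → Fin m := fun j => ⟨a + j, by omega⟩ with hfB_def
      have hfA_mono : StrictMono fA := fun i i' h => Fin.mk_lt_mk.mpr h
      have hfB_mono : StrictMono fB := fun j j' h => Fin.mk_lt_mk.mpr (by
        have : (j:ℕ) < (j':ℕ) := h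
        omega)
      have hfA_step : ∀ (i : ℕ) (h1 : i + 1 < a), (fA ⟨i + 1, h1⟩ : ℕ) = (fA ⟨i, by omega⟩ : ℕ) + 1 :=
        fun i h1 => rfl
      have hfB_step : ∀ (j : ℕ) (h1 : j + 1 < b), (fB ⟨j + 1, h1⟩ : ℕ) = (fB ⟨j, by omega⟩ : ℕ) + 1 :=
        fun j h1 => by show a + (j + 1) = a + j + 1; omega
      set A := Y.submatrix fA fA with hA_def
      set C := Y.submatrix fB fB with hC_def
      have hIA := IH a ham A (issymm_submatrix hS fA) (posdef_submatrix hY hfA_mono.injective)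
        (reduced_submatrix hR hfA_mono hfA_step) (x ∘ fA)
      have hIC := IH b hbm C (issymm_submatrix hS fB) (posdef_submatrix hY hfB_mono.injective)
        (reduced_submatrix hR hfB_mono hfB_step) (x ∘ fB)
      -- diagonal sums
      set SA : ℝ := ∑ i : Fin a, Y (fA i) (fA i) * x (fA i) ^ 2 with hSA_def
      set SC : ℝ := ∑ j : Fin b, Y (fB j) (fB j) * x (fB j) ^ 2 with hSC_def
      have hSA0 : 0 ≤ SA := Finset.sum_nonneg fun i _ => mul_nonneg (diag_pos hY _).le (sq_nonneg _)
      have hSC0 : 0 ≤ SC := Finset.sum_nonneg fun j _ => mul_nonneg (diag_pos hY _).le (sq_nonneg _)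
      have hdiag_split : ∑ i, Y i i * x i ^ 2 = SA + SC := by
        rw [sum_split hab (fun p' => Y p' p' * x p' ^ 2)]
      -- QF split
      set cross : ℝ := ∑ i : Fin a, ∑ j : Fin b, Y (fA i) (fB j) * x (fA i) * x (fB j)
        with hcross_def
      have hQsplit : QF Y x = QF A (x ∘ fA) + QF C (x ∘ fB) + 2 * cross := by
        have hsym : ∀ (u v : Fin m), Y u v = Y v u := fun u v => by
          have := congrFun (congrFun hS v) u
          simpa [Matrix.transpose_apply] using this
        rw [show QF Y x = ∑ p', ∑ q', Y p' q' * x p' * x q' from rfl]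
        rw [sum_split hab (fun p' => ∑ q', Y p' q' * x p' * x q')]
        have e1 : ∀ i : Fin a, ∑ q', Y (fA i) q' * x (fA i) * x q'
            = (∑ i' : Fin a, Y (fA i) (fA i') * x (fA i) * x (fA i'))
              + ∑ j : Fin b, Y (fA i) (fB j) * x (fA i) * x (fB j) := fun i => by
          rw [sum_split hab (fun q' => Y (fA i) q' * x (fA i) * x q')]
        have e2 : ∀ j : Fin b, ∑ q', Y (fB j) q' * x (fB j) * x q'
            = (∑ i : Fin a, Y (fB j) (fA i) * x (fB j) * x (fA i))
              + ∑ j' : Fin b, Y (fB j) (fB j') * x (fB j) * x (fB j') := fun j => by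
          rw [sum_split hab (fun q' => Y (fB j) q' * x (fB j) * x q')]
        rw [Finset.sum_congr rfl fun i _ => e1 i, Finset.sum_congr rfl fun j _ => e2 j,
          Finset.sum_add_distrib, Finset.sum_add_distrib]
        have e3 : ∑ j : Fin b, ∑ i : Fin a, Y (fB j) (fA i) * x (fB j) * x (fA i) = cross := by
          rw [Finset.sum_comm]
          exact Finset.sum_congr rfl fun i _ => Finset.sum_congr rfl fun j _ => by
            rw [hsym (fB j) (fA i)]; ring
        rw [e3]
        have e4 : QF A (x ∘ fA) = ∑ i : Fin a, ∑ i' : Fin a, Y (fA i) (fA i') * x (fA i) * x (fA i') := rfl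
        have e5 : QF C (x ∘ fB) = ∑ j : Fin b, ∑ j' : Fin b, Y (fB j) (fB j') * x (fB j) * x (fB j') := rfl
        rw [e4, e5]
        ring
      -- cross bound
      have hcross_bound : -(s * ((b:ℝ) * SA + (a:ℝ) * SC)) ≤ 2 * cross := by
        have hterm : ∀ (i : Fin a) (j : Fin b),
            -(s * (Y (fA i) (fA i) * x (fA i)^2 + Y (fB j) (fB j) * x (fB j)^2))
              ≤ 2 * (Y (fA i) (fB j) * x (fA i) * x (fB j)) := by
          intro i j
          have hij : fA i < fB j := by
            simp only [hfA_def, hfB_def, Fin.lt_def]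
            omega
          have hoff := offdiag_bound hS hR hij
          have hgap2 : Y (fA i) (fA i) ≤ s^2 * Y (fB j) (fB j) := by
            have h1 : Y (fA i) (fA i) ≤ Y p p := diag_mono hR (by
              simp only [hfA_def, Fin.le_def]
              omega)
            have h2 : Y q q ≤ Y (fB j) (fB j) := diag_mono hR (by
              simp only [hfB_def, Fin.le_def]
              omega)
            have h3 : t * Y q q ≤ t * Y (fB j) (fB j) := by
              apply mul_le_mul_of_nonneg_left h2 ht0.le
            calc Y (fA i) (fA i) ≤ Y p p := h1
              _ ≤ t * Y q q := hple
              _ ≤ t * Y (fB j) (fB j) := h3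
              _ = s^2 * Y (fB j) (fB j) := by rw [ht_def]
          exact pair_bound (diag_pos hY _) (diag_pos hY _) hs0 hoff hgap2 _ _
        have hsum : ∑ i : Fin a, ∑ j : Fin b,
            -(s * (Y (fA i) (fA i) * x (fA i)^2 + Y (fB j) (fB j) * x (fB j)^2))
            ≤ ∑ i : Fin a, ∑ j : Fin b, 2 * (Y (fA i) (fB j) * x (fA i) * x (fB j)) :=
          Finset.sum_le_sum fun i _ => Finset.sum_le_sum fun j _ => hterm i j
        have step1 : ∀ i : Fin a, ∑ j : Fin b,
            s * (Y (fA i) (fA i) * x (fA i)^2 + Y (fB j) (fB j) * x (fB j)^2)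
              = s * ((b:ℝ) * (Y (fA i) (fA i) * x (fA i)^2) + SC) := fun i => by
          rw [← Finset.mul_sum]
          congr 1
          rw [Finset.sum_add_distrib, Finset.sum_const, Finset.card_univ, Fintype.card_fin,
            nsmul_eq_mul, hSC_def]
        have pos_eq : ∑ i : Fin a, ∑ j : Fin b,
            s * (Y (fA i) (fA i) * x (fA i)^2 + Y (fB j) (fB j) * x (fB j)^2)
              = s * ((b:ℝ) * SA + (a:ℝ) * SC) := by
          rw [Finset.sum_congr rfl fun i _ => step1 i]
          have h6 : ∀ i : Fin a, s * ((b:ℝ) * (Y (fA i) (fA i) * x (fA i)^2) + SC)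
              = (s * (b:ℝ)) * (Y (fA i) (fA i) * x (fA i)^2) + s * SC := fun i => by ring
          rw [Finset.sum_congr rfl fun i _ => h6 i, Finset.sum_add_distrib, ← Finset.mul_sum,
            Finset.sum_const, Finset.card_univ, Fintype.card_fin, nsmul_eq_mul, ← hSA_def]
          ring
        have lhs_eq : ∑ i : Fin a, ∑ j : Fin b,
            -(s * (Y (fA i) (fA i) * x (fA i)^2 + Y (fB j) (fB j) * x (fB j)^2))
            = -(s * ((b:ℝ) * SA + (a:ℝ) * SC)) := by
          rw [← pos_eq]
          simp [Finset.sum_neg_distrib]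
        have rhs_eq : ∑ i : Fin a, ∑ j : Fin b, 2 * (Y (fA i) (fB j) * x (fA i) * x (fB j))
            = 2 * cross := by
          rw [hcross_def, Finset.mul_sum]
          exact Finset.sum_congr rfl fun i _ => by rw [Finset.mul_sum]
        rw [lhs_eq, rhs_eq] at hsum
        exact hsum
      -- combine
      have hba : (b:ℝ) ≤ (m:ℝ) := by exact_mod_cast Nat.sub_le m a
      have haa : (a:ℝ) ≤ (m:ℝ) := by
        have : a ≤ m := by omega
        exact_mod_cast this
      have hsm : s * (m:ℝ) ≤ d / 2 := by
        rw [hs_def]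
        rw [div_mul_eq_mul_div, div_le_div_iff₀ (by positivity) (by norm_num)]
        have hmn : (m:ℝ) ≤ (n:ℝ) + 1 := by exact_mod_cast hm
        nlinarith [hd0.le, Nat.cast_nonneg (α := ℝ) m]
      have hfinal : d' * (SA + SC) ≤ QF Y x := by
        rw [hQsplit]
        have h1 : s * ((b:ℝ) * SA + (a:ℝ) * SC) ≤ s * ((m:ℝ) * (SA + SC)) := by
          apply mul_le_mul_of_nonneg_left _ hs0.le
          nlinarith
        have h2 : s * ((m:ℝ) * (SA + SC)) ≤ (d/2) * (SA + SC) := by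
          rw [← mul_assoc]
          apply mul_le_mul_of_nonneg_right hsm (by linarith)
        have hSAeq : ∑ i : Fin a, A i i * (x ∘ fA) i ^ 2 = SA :=
          Finset.sum_congr rfl fun i _ => rfl
        have hSCeq : ∑ j : Fin b, C j j * (x ∘ fB) j ^ 2 = SC :=
          Finset.sum_congr rfl fun j _ => rfl
        have h3 : d * SA ≤ QF A (x ∘ fA) := by rw [← hSAeq]; exact hIA
        have h4 : d * SC ≤ QF C (x ∘ fB) := by rw [← hSCeq]; exact hIC
        have h5 : d' ≤ d / 2 := min_le_left _ _
        nlinarith [hcross_bound, hSA0, hSC0]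
      rw [hdiag_split]
      exact hfinal
    · -- no-gap case
      push_neg at hgap
      have hchain : ∀ (j : ℕ) (hj : j < m), t ^ j * Y ⟨j, hj⟩ ⟨j, hj⟩ ≤ Y ⟨0, hm0⟩ ⟨0, hm0⟩ := by
        intro j
        induction j with
        | zero => intro hj; simp
        | succ j ihj =>
          intro hj
          have hj' : j < m := by omega
          have hlt := hgap ⟨j, hj'⟩ ⟨j+1, hj⟩ rfl
          have h1 : t ^ (j+1) * Y ⟨j+1, hj⟩ ⟨j+1, hj⟩ ≤ t ^ j * Y ⟨j, hj'⟩ ⟨j, hj'⟩ := by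
            have : t ^ (j+1) * Y ⟨j+1, hj⟩ ⟨j+1, hj⟩ = t ^ j * (t * Y ⟨j+1, hj⟩ ⟨j+1, hj⟩) := by ring
            rw [this]
            exact mul_le_mul_of_nonneg_left hlt.le (by positivity)
          exact h1.trans (ihj hj')
      set last : Fin m := ⟨m - 1, by omega⟩ with hlast_def
      set M : ℝ := Y last last with hM_def
      have hM : ∀ k, Y k k ≤ M := fun k => diag_mono hR (by
        simp only [hlast_def, Fin.le_def]
        have := k.isLt
        omega)
      have hM0 : 0 < M := diag_pos hY last
      have h00 : τ * M ≤ Y ⟨0, hm0⟩ ⟨0, hm0⟩ := by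
        have h1 := hchain (m - 1) (by omega)
        have h2 : τ ≤ t ^ (m - 1) := by
          rw [hτ_def]
          apply pow_le_pow_of_le_one ht0.le ht1
          omega
        have h3 : τ * M ≤ t ^ (m-1) * M := mul_le_mul_of_nonneg_right h2 hM0.le
        exact h3.trans h1
      have hNn : (m:ℝ) < (N:ℝ)^2 := by
        have hmn : (m:ℝ) ≤ (n:ℝ) + 1 := by exact_mod_cast hm
        nlinarith
      have hN2 : 4 * (m:ℝ)^2 ≤ τ * (N:ℝ)^2 := by
        have hmn : (m:ℝ) ≤ (n:ℝ) + 1 := by exact_mod_cast hm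
        have h1 : 4 * ((n:ℝ)+1)^2 ≤ τ * (N:ℝ) := by
          rw [div_le_iff₀ hτ0] at hNceil
          nlinarith [hNceil]
        have h2 : τ * (N:ℝ) ≤ τ * (N:ℝ)^2 := by
          apply mul_le_mul_of_nonneg_left _ hτ0.le
          nlinarith
        nlinarith [Nat.cast_nonneg (α := ℝ) m]
      have hng := nogap hm0 hS hY hR hτ0 hM h00 N hN0 hNn hN2 x
      have hδEm : δE ≤ τ / (8 * (N:ℝ) ^ (2 * m)) := by
        rw [hδE_def]
        apply div_le_div_of_nonneg_left hτ0.le (by positivity)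
        have : (N:ℝ) ^ (2*m) ≤ (N:ℝ) ^ (2*(n+1)) := by
          apply pow_le_pow_right₀ hN1
          omega
        nlinarith
      have hstep : d' * ∑ i, Y i i * x i ^ 2 ≤ δE * (M * ∑ i, x i ^ 2) := by
        have h1 : ∑ i, Y i i * x i ^ 2 ≤ M * ∑ i, x i ^ 2 := by
          rw [Finset.mul_sum]
          exact Finset.sum_le_sum fun i _ => mul_le_mul_of_nonneg_right (hM i) (sq_nonneg _)
        have h2 : d' ≤ δE := min_le_right _ _
        have h3 : 0 ≤ M * ∑ i, x i ^ 2 :=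
          mul_nonneg hM0.le (Finset.sum_nonneg fun i _ => sq_nonneg _)
        nlinarith
      have hstep2 : δE * (M * ∑ i, x i ^ 2) ≤ τ / (8 * (N:ℝ) ^ (2 * m)) * (M * ∑ i, x i ^ 2) := by
        apply mul_le_mul_of_nonneg_right hδEm
        exact mul_nonneg hM0.le (Finset.sum_nonneg fun i _ => sq_nonneg _)
      linarith [hng]


/-! ### Schur complement recursion for the determinant -/

section Schur

variable {m : ℕ}

/-- the Schur complement value of the last diagonal entry, as a value of the form -/
lemma schur_val (Y : Matrix (Fin (m+1)) (Fin (m+1)) ℝ) (hS : Y.IsSymm)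
    (hA : (Y.submatrix Fin.castSucc Fin.castSucc).PosDef) :
    QF Y (Fin.snoc (-((Y.submatrix Fin.castSucc Fin.castSucc)⁻¹ *ᵥ
        (fun i => Y (Fin.castSucc i) (Fin.last m)))) 1 : Fin (m+1) → ℝ)
      = Y (Fin.last m) (Fin.last m)
        - (fun i => Y (Fin.castSucc i) (Fin.last m)) ⬝ᵥ
          ((Y.submatrix Fin.castSucc Fin.castSucc)⁻¹ *ᵥ
            (fun i => Y (Fin.castSucc i) (Fin.last m))) := by
  set A := Y.submatrix Fin.castSucc Fin.castSucc with hA_def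
  set w : Fin m → ℝ := fun i => Y (Fin.castSucc i) (Fin.last m) with hw_def
  set c : Fin m → ℝ := -(A⁻¹ *ᵥ w) with hc_def
  set z : Fin (m+1) → ℝ := Fin.snoc c 1 with hz_def
  have hzc : ∀ i : Fin m, z (Fin.castSucc i) = c i := fun i => Fin.snoc_castSucc _ _ _
  have hzl : z (Fin.last m) = 1 := Fin.snoc_last _ _
  have hsplit : QF Y z = QF A c + (∑ i, Y (Fin.castSucc i) (Fin.last m) * c i)
      + (∑ j, Y (Fin.last m) (Fin.castSucc j) * c j) + Y (Fin.last m) (Fin.last m) := by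
    rw [show QF Y z = ∑ p, ∑ q, Y p q * z p * z q from rfl]
    rw [Fin.sum_univ_castSucc (f := fun p => ∑ q, Y p q * z p * z q)]
    have e1 : ∀ p : Fin (m+1), ∑ q, Y p q * z p * z q
        = (∑ j : Fin m, Y p (Fin.castSucc j) * z p * c j) + Y p (Fin.last m) * z p * 1 := by
      intro p
      rw [Fin.sum_univ_castSucc (f := fun q => Y p q * z p * z q), hzl]
      congr 1
      exact Finset.sum_congr rfl fun j _ => by rw [hzc]
    rw [Finset.sum_congr rfl fun i _ => e1 (Fin.castSucc i), e1 (Fin.last m)]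
    rw [Finset.sum_add_distrib, hzl]
    have e2 : QF A c = ∑ i : Fin m, ∑ j : Fin m,
        Y (Fin.castSucc i) (Fin.castSucc j) * c i * c j := rfl
    rw [e2]
    have e3 : ∀ i : Fin m, ∑ j : Fin m, Y (Fin.castSucc i) (Fin.castSucc j) * z (Fin.castSucc i) * c j
        = ∑ j : Fin m, Y (Fin.castSucc i) (Fin.castSucc j) * c i * c j := fun i =>
      Finset.sum_congr rfl fun j _ => by rw [hzc]
    rw [Finset.sum_congr rfl fun i _ => e3 i]
    have e4 : ∑ i : Fin m, Y (Fin.castSucc i) (Fin.last m) * z (Fin.castSucc i) * 1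
        = ∑ i : Fin m, Y (Fin.castSucc i) (Fin.last m) * c i := by
      refine Finset.sum_congr rfl fun i _ => by rw [hzc]; ring
    rw [e4]
    ring
  have hAinv : A * A⁻¹ = 1 :=
    Matrix.mul_nonsing_inv A (isUnit_iff_ne_zero.mpr hA.det_pos.ne')
  have hQAc : QF A c = w ⬝ᵥ (A⁻¹ *ᵥ w) := by
    rw [QF_eq]
    unfold BL
    rw [hc_def]
    rw [Matrix.mulVec_neg, Matrix.mulVec_mulVec, hAinv, Matrix.one_mulVec]
    rw [dotProduct_neg, neg_dotProduct, neg_neg]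
    exact dotProduct_comm _ _
  have hwc : ∑ i, Y (Fin.castSucc i) (Fin.last m) * c i = -(w ⬝ᵥ (A⁻¹ *ᵥ w)) := by
    have : ∑ i, Y (Fin.castSucc i) (Fin.last m) * c i = w ⬝ᵥ c := rfl
    rw [this, hc_def, dotProduct_neg]
  have hwc2 : ∑ j, Y (Fin.last m) (Fin.castSucc j) * c j = -(w ⬝ᵥ (A⁻¹ *ᵥ w)) := by
    have hsym : ∀ j, Y (Fin.last m) (Fin.castSucc j) = w j := fun j => by
      have := congrFun (congrFun hS (Fin.last m)) (Fin.castSucc j)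
      simp only [Matrix.transpose_apply] at this
      rw [← this, hw_def]
    rw [Finset.sum_congr rfl fun j _ => by rw [hsym j]]
    have : ∑ j, w j * c j = w ⬝ᵥ c := rfl
    rw [this, hc_def, dotProduct_neg]
  rw [hsplit, hQAc, hwc, hwc2]
  ring

/-- the Schur complement determinant identity for splitting off the last row/column -/
lemma schur_det (Y : Matrix (Fin (m+1)) (Fin (m+1)) ℝ) (hS : Y.IsSymm)
    (hA : (Y.submatrix Fin.castSucc Fin.castSucc).PosDef) :
    Y.det = (Y.submatrix Fin.castSucc Fin.castSucc).det
      * (Y (Fin.last m) (Fin.last m)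
        - (fun i => Y (Fin.castSucc i) (Fin.last m)) ⬝ᵥ
          ((Y.submatrix Fin.castSucc Fin.castSucc)⁻¹ *ᵥ
            (fun i => Y (Fin.castSucc i) (Fin.last m)))) := by
  classical
  set A := Y.submatrix Fin.castSucc Fin.castSucc with hA_def
  set w : Fin m → ℝ := fun i => Y (Fin.castSucc i) (Fin.last m) with hw_def
  have hsym : ∀ j, Y (Fin.last m) (Fin.castSucc j) = w j := fun j => by
    have := congrFun (congrFun hS (Fin.last m)) (Fin.castSucc j)
    simp only [Matrix.transpose_apply] at this
    rw [← this, hw_def]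
  set e : Fin m ⊕ Fin 1 ≃ Fin (m+1) := finSumFinEquiv with he_def
  have he_inl : ∀ i : Fin m, e (Sum.inl i) = Fin.castSucc i := fun i =>
    Fin.ext (by simp [he_def])
  have he_inr : ∀ j : Fin 1, e (Sum.inr j) = Fin.last m := fun j => by
    have hj : j = 0 := Subsingleton.elim _ _
    subst hj
    exact Fin.ext (by simp [he_def])
  set B : Matrix (Fin m) (Fin 1) ℝ := Matrix.of (fun i (_ : Fin 1) => w i) with hB_def
  set C : Matrix (Fin 1) (Fin m) ℝ := Matrix.of (fun (_ : Fin 1) j => w j) with hC_def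
  set D : Matrix (Fin 1) (Fin 1) ℝ := Matrix.of (fun (_ _ : Fin 1) => Y (Fin.last m) (Fin.last m))
    with hD_def
  have hblocks : Y.submatrix e e = Matrix.fromBlocks A B C D := by
    ext p q
    rcases p with i | i <;> rcases q with j | j
    · rw [Matrix.submatrix_apply, Matrix.fromBlocks_apply₁₁, hA_def, Matrix.submatrix_apply,
        he_inl, he_inl]
    · rw [Matrix.submatrix_apply, Matrix.fromBlocks_apply₁₂, hB_def, Matrix.of_apply, hw_def,
        he_inl, he_inr]
    · rw [Matrix.submatrix_apply, Matrix.fromBlocks_apply₂₁, hC_def, Matrix.of_apply,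
        he_inl, he_inr, hsym]
    · rw [Matrix.submatrix_apply, Matrix.fromBlocks_apply₂₂, hD_def, Matrix.of_apply,
        he_inr, he_inr]
  have hdet1 : Y.det = (Y.submatrix e e).det := (Matrix.det_submatrix_equiv_self e Y).symm
  haveI : Invertible A := A.invertibleOfIsUnitDet (isUnit_iff_ne_zero.mpr hA.det_pos.ne')
  have hdet2 : (Matrix.fromBlocks A B C D).det = A.det * (D - C * ⅟A * B).det :=
    Matrix.det_fromBlocks₁₁ A B C D
  have hinv : (⅟A : Matrix (Fin m) (Fin m) ℝ) = A⁻¹ := Matrix.invOf_eq_nonsing_inv A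
  have hentry : (D - C * ⅟A * B).det = Y (Fin.last m) (Fin.last m) - w ⬝ᵥ (A⁻¹ *ᵥ w) := by
    rw [Matrix.det_fin_one, Matrix.sub_apply, hinv, Matrix.mul_assoc]
    have hCAB : (C * (A⁻¹ * B)) 0 0 = w ⬝ᵥ (A⁻¹ *ᵥ w) := by
      simp only [Matrix.mul_apply]
      exact Finset.sum_congr rfl fun i _ => rfl
    rw [hCAB]
    rfl
  rw [hdet1, hblocks, hdet2, hentry]

end Schur

/-- determinant bounds for Minkowski reduced matrices, sizes up to `n` -/
lemma det_bounds (n : ℕ) : ∃ c : ℝ, 0 < c ∧ ∀ m, m ≤ n →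
    ∀ Y : Matrix (Fin m) (Fin m) ℝ, Y.IsSymm → Y.PosDef → MinkowskiReduced Y →
    Y.det ≤ (∏ i, Y i i) ∧ (∏ i, Y i i) ≤ c * Y.det := by
  obtain ⟨d, hd0, hd1, hmain⟩ := main_lb n
  refine ⟨(1/d)^n, by positivity, ?_⟩
  have key : ∀ m, m ≤ n → ∀ Y : Matrix (Fin m) (Fin m) ℝ,
      Y.IsSymm → Y.PosDef → MinkowskiReduced Y →
      Y.det ≤ (∏ i, Y i i) ∧ d^m * (∏ i, Y i i) ≤ Y.det := by
    intro m
    induction m with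
    | zero =>
      intro _ Y _ _ _
      rw [show Y.det = 1 from Matrix.det_fin_zero]
      simp
    | succ m ihm =>
      intro hmn Y hS hY hR
      have hcs_mono : StrictMono (Fin.castSucc : Fin m → Fin (m+1)) := fun i j h =>
        Fin.castSucc_lt_castSucc_iff.mpr h
      have hcs_step : ∀ (i : ℕ) (h1 : i + 1 < m),
          ((Fin.castSucc (⟨i + 1, h1⟩ : Fin m)) : ℕ) = (Fin.castSucc (⟨i, by omega⟩ : Fin m) : ℕ) + 1 :=
        fun i h1 => rfl
      set A := Y.submatrix Fin.castSucc Fin.castSucc with hA_def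
      have hAS : A.IsSymm := issymm_submatrix hS _
      have hAP : A.PosDef := posdef_submatrix hY hcs_mono.injective
      have hAR : MinkowskiReduced A := reduced_submatrix hR hcs_mono hcs_step
      obtain ⟨ihm1, ihm2⟩ := ihm (by omega) A hAS hAP hAR
      set w : Fin m → ℝ := fun i => Y (Fin.castSucc i) (Fin.last m) with hw_def
      set h : ℝ := Y (Fin.last m) (Fin.last m) - w ⬝ᵥ (A⁻¹ *ᵥ w) with hh_def
      have hdet : Y.det = A.det * h := schur_det Y hS hAP
      have hval : h = QF Y (Fin.snoc (-(A⁻¹ *ᵥ w)) 1) := (schur_val Y hS hAP).symm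
      -- upper bound for h
      have hup : h ≤ Y (Fin.last m) (Fin.last m) := by
        rw [hh_def]
        have hIP : (A⁻¹).PosDef := hAP.inv
        have : 0 ≤ w ⬝ᵥ (A⁻¹ *ᵥ w) := by
          have := hIP.posSemidef.dotProduct_mulVec_nonneg w
          simpa using this
        linarith
      -- lower bound for h
      have hlow : d * Y (Fin.last m) (Fin.last m) ≤ h := by
        rw [hval]
        have := hmain (m+1) hmn Y hS hY hR (Fin.snoc (-(A⁻¹ *ᵥ w)) 1)
        refine le_trans ?_ this
        have hterm : ∑ i, Y i i * (Fin.snoc (-(A⁻¹ *ᵥ w)) 1 : Fin (m+1) → ℝ) i ^ 2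
            ≥ Y (Fin.last m) (Fin.last m) := by
          rw [Fin.sum_univ_castSucc (f := fun i => Y i i * (Fin.snoc (-(A⁻¹ *ᵥ w)) 1 : Fin (m+1) → ℝ) i ^ 2)]
          have h1 : (Fin.snoc (-(A⁻¹ *ᵥ w)) 1 : Fin (m+1) → ℝ) (Fin.last m) = 1 := Fin.snoc_last _ _
          rw [h1]
          have h2 : 0 ≤ ∑ i : Fin m, Y (Fin.castSucc i) (Fin.castSucc i)
              * (Fin.snoc (-(A⁻¹ *ᵥ w)) 1 : Fin (m+1) → ℝ) (Fin.castSucc i) ^ 2 :=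
            Finset.sum_nonneg fun i _ => mul_nonneg (diag_pos hY _).le (sq_nonneg _)
          nlinarith [h2]
        nlinarith [hterm, hd0.le, diag_pos hY (Fin.last m)]
      have hprod : ∏ i, Y i i = (∏ i : Fin m, A i i) * Y (Fin.last m) (Fin.last m) :=
        Fin.prod_univ_castSucc (f := fun i => Y i i)
      have hAdet : 0 < A.det := hAP.det_pos
      have hAprod : 0 < ∏ i : Fin m, A i i :=
        Finset.prod_pos fun i _ => diag_pos hAP i
      have hlast : 0 < Y (Fin.last m) (Fin.last m) := diag_pos hY (Fin.last m)
      constructor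
      · rw [hdet, hprod]
        have hh0 : 0 ≤ h := le_trans (by positivity) hlow
        calc A.det * h ≤ A.det * Y (Fin.last m) (Fin.last m) :=
              mul_le_mul_of_nonneg_left hup hAdet.le
          _ ≤ (∏ i : Fin m, A i i) * Y (Fin.last m) (Fin.last m) :=
              mul_le_mul_of_nonneg_right ihm1 hlast.le
      · rw [hdet, hprod]
        have hdm : 0 < d ^ m := by positivity
        calc d^(m+1) * ((∏ i : Fin m, A i i) * Y (Fin.last m) (Fin.last m))
            = (d^m * (∏ i : Fin m, A i i)) * (d * Y (Fin.last m) (Fin.last m)) := by ring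
          _ ≤ A.det * (d * Y (Fin.last m) (Fin.last m)) :=
              mul_le_mul_of_nonneg_right ihm2 (by positivity)
          _ ≤ A.det * h := mul_le_mul_of_nonneg_left hlow hAdet.le
  intro m hmn Y hS hY hR
  obtain ⟨h1, h2⟩ := key m hmn Y hS hY hR
  refine ⟨h1, ?_⟩
  have hdet0 : 0 < Y.det := hY.det_pos
  have hdn : d^n ≤ d^m := pow_le_pow_of_le_one hd0.le hd1 hmn
  have hprodpos : 0 ≤ ∏ i, Y i i := le_of_lt (Finset.prod_pos fun i _ => diag_pos hY i)
  have h5 : d^n * (∏ i, Y i i) ≤ Y.det :=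
    le_trans (mul_le_mul_of_nonneg_right hdn hprodpos) h2
  have h6 : (∏ i, Y i i) * d^n ≤ Y.det := by linarith [h5, mul_comm (d^n) (∏ i, Y i i)]
  rw [show (1/d)^n * Y.det = Y.det / d^n by rw [div_pow]; ring]
  exact (le_div_iff₀ (by positivity)).mpr h6
end MinkRed

theorem stmt14 (g : ℕ) (hg : 1 ≤ g) :
    ∃ c : ℝ, 0 < c ∧
      ∀ Y : Matrix (Fin g) (Fin g) ℝ, Y.IsSymm → Y.PosDef → MinkowskiReduced Y →
        Y.det ≤ (∏ i : Fin g, Y i i) ∧ (∏ i : Fin g, Y i i) ≤ c * Y.det := by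
  obtain ⟨c, hc0, hkey⟩ := MinkRed.det_bounds g
  exact ⟨c, hc0, fun Y hS hY hR => hkey g (le_refl g) Y hS hY hR⟩
end

section
/- Let g ≥ 1 and let Z = X + iY ∈ S_g, with Y = (y_{ij}). Then √3/2 ≤ y_{11} and y_{11} ≤ y_{22} ≤ … ≤ y_{gg}. -/
open Matrix

/-- The standard alternating matrix `J = [[0, I], [-I, 0]]` of degree `2g`. -/
def symplJ (g : ℕ) (R : Type*) [CommRing R] :
    Matrix (Fin g ⊕ Fin g) (Fin g ⊕ Fin g) R :=
  Matrix.fromBlocks 0 1 (-1) 0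

/-- `T ∈ Sp_{2g}(R)` iff `T * J * Tᵀ = J`. -/
def IsSymplectic {g : ℕ} {R : Type*} [CommRing R]
    (T : Matrix (Fin g ⊕ Fin g) (Fin g ⊕ Fin g) R) : Prop :=
  T * symplJ g R * Tᵀ = symplJ g R

/-- The entrywise imaginary part of a complex matrix. -/
def imPart {g : ℕ} (Z : Matrix (Fin g) (Fin g) ℂ) : Matrix (Fin g) (Fin g) ℝ :=
  Z.map Complex.im

/-- `Z` lies in the Siegel upper half-space `ℍ_g`: it is symmetric with
positive definite imaginary part. -/
def InSiegel {g : ℕ} (Z : Matrix (Fin g) (Fin g) ℂ) : Prop :=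
  Z.IsSymm ∧ (imPart Z).PosDef

/-- `Z` lies in the Siegel fundamental domain `S_g`. -/
def InFundamentalDomain {g : ℕ} (Z : Matrix (Fin g) (Fin g) ℂ) : Prop :=
  InSiegel Z ∧
  (∀ i j, |(Z i j).re| ≤ 1 / 2) ∧
  MinkowskiReduced (imPart Z) ∧
  ∀ A B C D : Matrix (Fin g) (Fin g) ℤ,
    IsSymplectic (Matrix.fromBlocks A B C D) →
    1 ≤ ‖(C.map (fun n => (n : ℂ)) * Z + D.map (fun n => (n : ℂ))).det‖

lemma symp_aux (g : ℕ) (hg : 0 < g) :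
    IsSymplectic (R := ℤ) (Matrix.fromBlocks (1 - Matrix.single ⟨0,hg⟩ ⟨0,hg⟩ 1)
      (-(Matrix.single ⟨0,hg⟩ ⟨0,hg⟩ 1)) (Matrix.single ⟨0,hg⟩ ⟨0,hg⟩ 1)
      (1 - Matrix.single ⟨0,hg⟩ ⟨0,hg⟩ 1)) := by
  set e : Fin g := ⟨0, hg⟩
  set E := Matrix.single e e (1:ℤ) with hE
  have hEE : E * E = E := by rw [hE]; simp
  have hET : Eᵀ = E := by
    ext i j; simp [hE, Matrix.single, and_comm]
  unfold IsSymplectic symplJ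
  rw [Matrix.fromBlocks_transpose]
  rw [Matrix.fromBlocks_multiply, Matrix.fromBlocks_multiply]
  simp only [Matrix.transpose_sub, Matrix.transpose_one, Matrix.transpose_neg, hET,
    Matrix.mul_zero, Matrix.zero_mul, add_zero, zero_add]
  have h00 : -E * -1 * (1 - E) + (1 - E) * 1 * -E = (0 : Matrix (Fin g) (Fin g) ℤ) := by
    simp only [mul_sub, sub_mul, mul_one, one_mul, mul_neg, neg_mul, neg_neg, hEE]; abel
  have h01 : -E * -1 * E + (1 - E) * 1 * (1 - E) = (1 : Matrix (Fin g) (Fin g) ℤ) := by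
    simp only [mul_sub, sub_mul, mul_one, one_mul, mul_neg, neg_mul, neg_neg, hEE]; abel
  have h10 : (1 - E) * -1 * (1 - E) + E * 1 * -E = (-1 : Matrix (Fin g) (Fin g) ℤ) := by
    simp only [mul_sub, sub_mul, mul_one, one_mul, mul_neg, neg_mul, neg_neg, hEE]; abel
  have h11 : (1 - E) * -1 * E + E * 1 * (1 - E) = (0 : Matrix (Fin g) (Fin g) ℤ) := by
    simp only [mul_sub, sub_mul, mul_one, one_mul, mul_neg, neg_mul, neg_neg, hEE]; abel
  rw [h00, h01, h10, h11]

theorem stmt15 (g : ℕ) (hg : 0 < g)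
    (Z : Matrix (Fin g) (Fin g) ℂ) (hZ : InFundamentalDomain Z) :
    Real.sqrt 3 / 2 ≤ imPart Z ⟨0, hg⟩ ⟨0, hg⟩ ∧
      ∀ i j : Fin g, i ≤ j → imPart Z i i ≤ imPart Z j j := by
  obtain ⟨⟨hsymm, hpos⟩, hre, ⟨hmink, _⟩, hdet⟩ := hZ
  constructor
  · -- y00 ≥ √3/2
    set e : Fin g := ⟨0, hg⟩
    set E := Matrix.single e e (1:ℤ) with hE
    have habs := hdet (1 - E) (-E) E (1 - E) (symp_aux g hg)
    -- identify the matrix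
    have hmapE : E.map (fun n : ℤ => (n : ℂ)) = Matrix.single e e (1:ℂ) := by
      ext i j
      simp only [Matrix.map_apply, hE]
      by_cases h : i = e ∧ j = e
      · obtain ⟨h1, h2⟩ := h; subst h1; subst h2; simp
      · have hne : ¬(e = i ∧ e = j) := fun hc => h ⟨hc.1.symm, hc.2.symm⟩
        rw [Matrix.single_apply_of_ne (h := hne),
          Matrix.single_apply_of_ne (h := hne)]
        simp
    have hmapD : (1 - E).map (fun n : ℤ => (n : ℂ)) = 1 - Matrix.single e e (1:ℂ) := by
      ext i j
      simp only [Matrix.map_apply, hE, Matrix.sub_apply, Matrix.one_apply]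
      by_cases h : i = e ∧ j = e
      · obtain ⟨h1, h2⟩ := h; subst h1; subst h2; simp
      · have hne : ¬(e = i ∧ e = j) := fun hc => h ⟨hc.1.symm, hc.2.symm⟩
        rw [Matrix.single_apply_of_ne (h := hne),
          Matrix.single_apply_of_ne (h := hne)]
        split <;> simp
    set M : Matrix (Fin g) (Fin g) ℂ :=
      Matrix.single e e (1:ℂ) * Z + (1 - Matrix.single e e (1:ℂ)) with hM
    rw [hmapE, hmapD, ← hM] at habs
    have htri : M.BlockTriangular id := by
      intro i j hij
      have hie : i ≠ e := by
        intro h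
        have h1 : (j : ℕ) < (i : ℕ) := hij
        have h2 : (i : ℕ) = 0 := by rw [h]
        omega
      have hij' : i ≠ j := (ne_of_gt hij)
      simp [hM, Matrix.add_apply, Matrix.sub_apply, Matrix.one_apply,
        Matrix.single_mul_apply_of_ne (c := (1:ℂ)) e e i j hie,
        Matrix.single_apply_of_row_ne hie.symm, hie, hij'.symm, hij']
    have hdetM : M.det = Z e e := by
      rw [Matrix.det_of_upperTriangular htri]
      rw [Finset.prod_eq_single e]
      · simp [hM, Matrix.add_apply, Matrix.sub_apply, Matrix.one_apply]
      · intro i _ hie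
        simp [hM, Matrix.add_apply, Matrix.sub_apply, Matrix.one_apply,
          Matrix.single_mul_apply_of_ne (c := (1:ℂ)) e e i i hie,
          Matrix.single_apply_of_row_ne hie.symm, hie]
      · simp
    rw [hdetM] at habs
    have hx : |(Z e e).re| ≤ 1 / 2 := hre e e
    have hy : 0 < imPart Z e e := by
      exact hpos.diag_pos
    have him : imPart Z e e = (Z e e).im := rfl
    have hsq : 1 ≤ (Z e e).re ^ 2 + (Z e e).im ^ 2 := by
      have h1 : (1:ℝ) ≤ ‖Z e e‖ ^ 2 := by nlinarith [norm_nonneg (Z e e)]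
      rwa [Complex.sq_norm, Complex.normSq_apply, ← pow_two, ← pow_two] at h1
    rw [him]
    have hx2 : (Z e e).re ^ 2 ≤ 1 / 4 := by
      have := abs_le.mp hx
      nlinarith [this.1, this.2]
    rw [him] at hy
    nlinarith [Real.sq_sqrt (show (0:ℝ) ≤ 3 by norm_num), Real.sqrt_nonneg 3]
  · -- monotonicity
    intro i j hij
    have key := hmink i (fun l => if l = j then 1 else 0) ?_
    · have hdot : dotProduct (fun l => (((if l = j then 1 else 0 : ℤ)) : ℝ))
          ((imPart Z).mulVec fun l => (((if l = j then 1 else 0 : ℤ)) : ℝ)) = imPart Z j j := by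
        simp [dotProduct, Matrix.mulVec, apply_ite, Finset.sum_ite_eq, Finset.sum_ite_eq']
      rwa [hdot] at key
    · have hjmem : j ∈ Finset.univ.filter fun l => i ≤ l := by simp [hij]
      have hdvd := Finset.gcd_dvd (f := fun l => if l = j then (1:ℤ) else 0) hjmem
      simp only [if_pos rfl] at hdvd
      have hnorm := Finset.normalize_gcd (s := Finset.univ.filter fun l => i ≤ l)
        (f := fun l => if l = j then (1:ℤ) else 0)
      rcases Int.isUnit_iff.mp (isUnit_of_dvd_one hdvd) with h | h
      · exact h
      · rw [← hnorm, h, Int.normalize_of_nonpos (by norm_num)]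
        norm_num
end
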